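/- Let f, g : ℝ² → ℝ be C¹ functions satisfying f_x = g_y, and let A_n, B_n be the polynomials in f, g defined by A_n = (1/(2(n+1)!))[(f+ig)^{n+1}+(f−ig)^{n+1}], B_n = (1/(2i(n+1)!))[(f+ig)^{n+1}−(f−ig)^{n+1}]. Then for all n ≥ 0: B_n·(f_y + g_x) = −(A_{n+1})_x + (B_{n+1})_y. -/

import Mathlib

open Complex

noncomputable def An (n : ℕ) (a b : ℝ) : ℝ :=
  ((((a : ℂ) + Complex.I * b) ^ (n + 1) + ((a : ℂ) - Complex.I * b) ^ (n + 1)) /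
    (2 * ((n + 1).factorial : ℂ))).re

noncomputable def Bn (n : ℕ) (a b : ℝ) : ℝ :=
  ((((a : ℂ) + Complex.I * b) ^ (n + 1) - ((a : ℂ) - Complex.I * b) ^ (n + 1)) /
    (2 * Complex.I * ((n + 1).factorial : ℂ))).re

lemma An_eq (n : ℕ) (a b : ℝ) :
    An n a b = (((a:ℂ) + Complex.I*b)^(n+1)).re / (n+1).factorial := by
  have hc : ((a:ℂ) - Complex.I*b) = starRingEnd ℂ ((a:ℂ) + Complex.I*b) := by
    simp [Complex.ext_iff]
  rw [An, hc, ← map_pow, Complex.add_conj]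
  set z := (((a:ℂ) + Complex.I*b)^(n+1))
  have hd : ((2 * z.re : ℝ) : ℂ) / (2 * ((n + 1).factorial : ℂ))
      = ((z.re / (n+1).factorial : ℝ) : ℂ) := by
    have h1 : ((n+1).factorial : ℝ) ≠ 0 := by positivity
    have h2 : ((n+1).factorial : ℂ) ≠ 0 := Nat.cast_ne_zero.mpr (Nat.factorial_ne_zero _)
    push_cast
    field_simp
  rw [hd, Complex.ofReal_re]

lemma Bn_eq (n : ℕ) (a b : ℝ) :
    Bn n a b = (((a:ℂ) + Complex.I*b)^(n+1)).im / (n+1).factorial := by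
  have hc : ((a:ℂ) - Complex.I*b) = starRingEnd ℂ ((a:ℂ) + Complex.I*b) := by
    simp [Complex.ext_iff]
  rw [Bn, hc, ← map_pow, Complex.sub_conj]
  set z := (((a:ℂ) + Complex.I*b)^(n+1))
  have hd : ((2 * z.im : ℝ) : ℂ) * Complex.I / (2 * Complex.I * ((n + 1).factorial : ℂ))
      = ((z.im / (n+1).factorial : ℝ) : ℂ) := by
    have h2 : ((n+1).factorial : ℂ) ≠ 0 := Nat.cast_ne_zero.mpr (Nat.factorial_ne_zero _)
    push_cast
    field_simp
  rw [hd, Complex.ofReal_re]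

/-- For C¹ functions with `f_x = g_y`:
`B_n·(f_y + g_x) = −(A_{n+1})_x + (B_{n+1})_y`. -/
theorem stmt5 (f g : ℝ × ℝ → ℝ) (hf : ContDiff ℝ 1 f) (hg : ContDiff ℝ 1 g)
    (hfg : ∀ p : ℝ × ℝ, fderiv ℝ f p (1, 0) = fderiv ℝ g p (0, 1)) :
    ∀ (n : ℕ) (p : ℝ × ℝ),
      Bn n (f p) (g p) * (fderiv ℝ f p (0, 1) + fderiv ℝ g p (1, 0)) =
        -fderiv ℝ (fun q => An (n + 1) (f q) (g q)) p (1, 0) +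
          fderiv ℝ (fun q => Bn (n + 1) (f q) (g q)) p (0, 1) := by
  intro n p
  have hF : HasFDerivAt f (fderiv ℝ f p) p :=
    ((hf.differentiable one_ne_zero) p).hasFDerivAt
  have hG : HasFDerivAt g (fderiv ℝ g p) p :=
    ((hg.differentiable one_ne_zero) p).hasFDerivAt
  set F := fderiv ℝ f p with hFdef
  set G := fderiv ℝ g p with hGdef
  set w : ℝ × ℝ → ℂ := fun q => (f q : ℂ) + Complex.I * (g q) with hwdef
  set L : ℝ × ℝ →L[ℝ] ℂ := Complex.ofRealCLM.comp F + Complex.I • Complex.ofRealCLM.comp G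
    with hLdef
  have hw : HasFDerivAt w L p := by
    have h1 : HasFDerivAt (fun q => ((f q : ℝ) : ℂ)) (Complex.ofRealCLM.comp F) p :=
      Complex.ofRealCLM.hasFDerivAt.comp p hF
    have h2 : HasFDerivAt (fun q => ((g q : ℝ) : ℂ)) (Complex.ofRealCLM.comp G) p :=
      Complex.ofRealCLM.hasFDerivAt.comp p hG
    exact h1.add (h2.const_mul Complex.I)
  set m := n + 2 with hmdef
  have hpow : HasFDerivAt (fun q => (w q) ^ m) (((m : ℂ) * w p ^ (n + 1)) • L) p := by
    have hd : HasDerivAt (fun z : ℂ => z ^ m) ((m : ℂ) * w p ^ (n + 1)) (w p) := by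
      have := hasDerivAt_pow m (w p)
      simpa [hmdef] using this
    exact hd.comp_hasFDerivAt p hw
  -- A part
  have hA : HasFDerivAt (fun q => An (n + 1) (f q) (g q))
      (((m.factorial : ℝ))⁻¹ • (Complex.reCLM.comp ((((m : ℂ) * w p ^ (n + 1)) • L).restrictScalars ℝ))) p := by
    have h1 : HasFDerivAt (fun q => ((w q) ^ m).re)
        (Complex.reCLM.comp ((((m : ℂ) * w p ^ (n + 1)) • L).restrictScalars ℝ)) p :=
      Complex.reCLM.hasFDerivAt.comp p hpow
    have h2 := h1.const_smul ((m.factorial : ℝ))⁻¹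
    have heq : (fun q => An (n + 1) (f q) (g q))
        = fun q => ((m.factorial : ℝ))⁻¹ • ((w q) ^ m).re := by
      funext q
      rw [An_eq]
      simp [div_eq_inv_mul]
      rfl
    rw [heq]
    exact h2
  have hB : HasFDerivAt (fun q => Bn (n + 1) (f q) (g q))
      (((m.factorial : ℝ))⁻¹ • (Complex.imCLM.comp ((((m : ℂ) * w p ^ (n + 1)) • L).restrictScalars ℝ))) p := by
    have h1 : HasFDerivAt (fun q => ((w q) ^ m).im)
        (Complex.imCLM.comp ((((m : ℂ) * w p ^ (n + 1)) • L).restrictScalars ℝ)) p :=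
      Complex.imCLM.hasFDerivAt.comp p hpow
    have h2 := h1.const_smul ((m.factorial : ℝ))⁻¹
    have heq : (fun q => Bn (n + 1) (f q) (g q))
        = fun q => ((m.factorial : ℝ))⁻¹ • ((w q) ^ m).im := by
      funext q
      rw [Bn_eq]
      simp [div_eq_inv_mul]
      rfl
    rw [heq]
    exact h2
  rw [hA.fderiv, hB.fderiv]
  have hL10 : L (1, 0) = ((F (1, 0) : ℝ) : ℂ) + Complex.I * (G (1, 0)) := by
    simp [hLdef]
  have hL01 : L (0, 1) = ((F (0, 1) : ℝ) : ℂ) + Complex.I * (G (0, 1)) := by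
    simp [hLdef]
  simp only [ContinuousLinearMap.coe_smul', Pi.smul_apply, ContinuousLinearMap.coe_comp',
    Function.comp_apply, ContinuousLinearMap.coe_restrictScalars',
    ContinuousLinearMap.smul_apply, Complex.reCLM_apply, Complex.imCLM_apply,
    hL10, hL01, smul_eq_mul]
  rw [Bn_eq]
  have hfg' : F (1, 0) = G (0, 1) := hfg p
  have hfac : (m.factorial : ℝ) = (m : ℝ) * (n + 1).factorial := by
    rw [hmdef, show n + 2 = (n + 1) + 1 from rfl, Nat.factorial_succ]
    push_cast; ring
  generalize w p ^ (n + 1) = Z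
  simp only [Complex.mul_re, Complex.mul_im, Complex.add_re, Complex.add_im,
    Complex.ofReal_re, Complex.ofReal_im, Complex.I_re, Complex.I_im,
    Complex.natCast_re, Complex.natCast_im]
  have hfacne : ((n + 1).factorial : ℝ) ≠ 0 := by positivity
  have hmne : ((m : ℝ)) ≠ 0 := by positivity
  rw [hfac]
  field_simp
  ring_nf
  rw [hfg']
  ring
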